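/- Let a > 0 and 0 < h ≤ a. Then ∫₀ʰ u^{−1/2} (ln(a/u))^{−1/2} du ≤ 2 √π · √h. -/

import Mathlib

open MeasureTheory Set Real

lemma rpow_neg_half_eq' {p : ℝ} (hp : 0 < p) : p ^ (-(1:ℝ)/2) = (Real.sqrt p)⁻¹ := by
  rw [show (-(1:ℝ)/2) = -(1/2 : ℝ) by ring, Real.rpow_neg hp.le, ← Real.sqrt_eq_rpow]

theorem integral_inv_sqrt_mul_inv_sqrt_log_le
    (a h : ℝ) (ha : 0 < a) (hh : 0 < h) (hha : h ≤ a) :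
    (∫ u in Set.Ioc (0:ℝ) h,
        u ^ (-(1:ℝ) / 2) * (Real.log (a / u)) ^ (-(1:ℝ) / 2)) ≤
      2 * Real.sqrt Real.pi * Real.sqrt h := by
  set g : ℝ → ℝ := fun u => u ^ (-(1:ℝ) / 2) * (Real.log (a / u)) ^ (-(1:ℝ) / 2) with hg
  set L : ℝ := Real.log (a / h) with hLdef
  have hL : 0 ≤ L := Real.log_nonneg (by rw [le_div_iff₀ hh]; linarith)
  set x : ℝ := Real.sqrt (L / 2) with hxdef
  have hx0 : 0 ≤ x := Real.sqrt_nonneg _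
  have hx2 : x ^ 2 = L / 2 := Real.sq_sqrt (by linarith)
  set φ : ℝ → ℝ := fun t => a * Real.exp (-2 * t ^ 2) with hφ
  have hφx : φ x = h := by
    have h1 : -2 * x ^ 2 = -L := by rw [hx2]; ring
    rw [hφ]; simp only [h1, hLdef]
    rw [Real.exp_neg, Real.exp_log (by positivity), ← div_eq_mul_inv]
    field_simp
  have hderiv : ∀ t ∈ Ioi x, HasDerivWithinAt φ (-4 * a * t * Real.exp (-2 * t ^ 2)) (Ioi x) t := by
    intro t _
    have h1 : HasDerivAt (fun t : ℝ => -2 * t ^ 2) (-4 * t) t := by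
      have h0 := (hasDerivAt_pow 2 t).const_mul (-2 : ℝ)
      refine h0.congr_deriv ?_
      push_cast
      ring
    have := (h1.exp).const_mul a
    refine this.hasDerivWithinAt.congr_deriv ?_
    ring
  have hinj : InjOn φ (Ioi x) := by
    intro s hs t ht hst
    have hs0 : 0 ≤ s := le_trans hx0 (le_of_lt hs)
    have ht0 : 0 ≤ t := le_trans hx0 (le_of_lt ht)
    simp only [hφ] at hst
    have hee : Real.exp (-2 * s ^ 2) = Real.exp (-2 * t ^ 2) :=
      mul_left_cancel₀ ha.ne' hst
    have h2 : s ^ 2 = t ^ 2 := by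
      have := Real.exp_injective hee; nlinarith
    nlinarith [sq_nonneg (s - t), sq_nonneg (s + t)]
  have himg : φ '' Ioi x = Ioo 0 h := by
    ext u
    constructor
    · rintro ⟨t, ht, rfl⟩
      have ht' : x < t := ht
      constructor
      · positivity
      · rw [← hφx]
        have : x ^ 2 < t ^ 2 := by nlinarith
        exact mul_lt_mul_of_pos_left (Real.exp_lt_exp.2 (by nlinarith)) ha
    · rintro ⟨hu0, huh⟩
      refine ⟨Real.sqrt (Real.log (a / u) / 2), ?_, ?_⟩
      · rw [hxdef, mem_Ioi]
        apply Real.sqrt_lt_sqrt (by linarith)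
        have : L < Real.log (a / u) := by
          apply Real.log_lt_log (by positivity)
          apply div_lt_div_of_pos_left ha hu0 huh
        linarith
      · have hlogu : 0 ≤ Real.log (a / u) / 2 := by
          have h1 : (1:ℝ) ≤ a / u := by rw [le_div_iff₀ hu0]; linarith
          have := Real.log_nonneg h1; linarith
        have hsq : Real.sqrt (Real.log (a / u) / 2) ^ 2 = Real.log (a / u) / 2 :=
          Real.sq_sqrt hlogu
        rw [hφ]; simp only [hsq]
        rw [show -2 * (Real.log (a / u) / 2) = -Real.log (a / u) by ring,
          Real.exp_neg, Real.exp_log (by positivity), ← div_eq_mul_inv]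
        field_simp
  have hIoc : (∫ u in Set.Ioc (0:ℝ) h, g u) = ∫ u in Ioo (0:ℝ) h, g u :=
    integral_Ioc_eq_integral_Ioo
  have hchg : (∫ u in Ioo (0:ℝ) h, g u)
      = ∫ t in Ioi x, |(-4 * a * t * Real.exp (-2 * t ^ 2))| • g (φ t) := by
    rw [← himg]
    exact integral_image_eq_integral_abs_deriv_smul measurableSet_Ioi hderiv hinj g
  have hpt : ∀ t ∈ Ioi x, |(-4 * a * t * Real.exp (-2 * t ^ 2))| • g (φ t)
      = 2 * Real.sqrt 2 * Real.sqrt a * Real.exp (-t ^ 2) := by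
    intro t ht
    have ht0 : 0 < t := lt_of_le_of_lt hx0 ht
    have hE : (0:ℝ) < Real.exp (-2 * t ^ 2) := Real.exp_pos _
    have hpos4 : 0 < 4 * a * t * Real.exp (-2 * t ^ 2) := by positivity
    have habs : |(-4 * a * t * Real.exp (-2 * t ^ 2))| = 4 * a * t * Real.exp (-2 * t ^ 2) := by
      rw [abs_of_nonpos (by nlinarith)]; ring
    have hφt : 0 < φ t := by rw [hφ]; positivity
    have hlog : Real.log (a / φ t) = 2 * t ^ 2 := by
      rw [hφ]
      rw [show a / (a * Real.exp (-2 * t ^ 2)) = Real.exp (2 * t ^ 2) by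
        rw [show (-2 : ℝ) * t ^ 2 = -(2 * t ^ 2) by ring, Real.exp_neg]; field_simp]
      exact Real.log_exp _
    have h2t : (0:ℝ) < 2 * t ^ 2 := by positivity
    rw [smul_eq_mul, habs, hg]
    simp only
    rw [hlog, rpow_neg_half_eq' hφt, rpow_neg_half_eq' h2t]
    have hse : Real.sqrt (Real.exp (-2 * t ^ 2)) = Real.exp (-t ^ 2) := by
      rw [← Real.exp_half]; congr 1; ring
    have hsqrt2t : Real.sqrt (2 * t ^ 2) = Real.sqrt 2 * t := by
      rw [Real.sqrt_mul (by norm_num : (0:ℝ) ≤ 2), Real.sqrt_sq ht0.le]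
    rw [hφ]
    simp only
    rw [Real.sqrt_mul ha.le, hse, hsqrt2t]
    have hsa : Real.sqrt a * Real.sqrt a = a := Real.mul_self_sqrt ha.le
    have h22 : Real.sqrt 2 * Real.sqrt 2 = 2 := Real.mul_self_sqrt (by norm_num)
    have hEE : Real.exp (-2 * t ^ 2) = Real.exp (-t ^ 2) * Real.exp (-t ^ 2) := by
      rw [← Real.exp_add]; ring_nf
    have he0 : 0 < Real.exp (-t ^ 2) := Real.exp_pos _
    have key : 4 * a * t * (Real.exp (-t ^ 2) * Real.exp (-t ^ 2))
        = (2 * Real.sqrt 2 * Real.sqrt a * Real.exp (-t ^ 2)) *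
          ((Real.sqrt a * Real.exp (-t ^ 2)) * (Real.sqrt 2 * t)) := by
      linear_combination (-4 * t * Real.exp (-t ^ 2) ^ 2) * hsa +
        (-2 * t * Real.exp (-t ^ 2) ^ 2 * (Real.sqrt a * Real.sqrt a)) * h22
    have hP : Real.sqrt a * Real.exp (-t ^ 2) ≠ 0 := by positivity
    have hQ : Real.sqrt 2 * t ≠ 0 := by positivity
    rw [hEE, key]
    field_simp
  have hchg2 : (∫ t in Ioi x, |(-4 * a * t * Real.exp (-2 * t ^ 2))| • g (φ t))
      = ∫ t in Ioi x, 2 * Real.sqrt 2 * Real.sqrt a * Real.exp (-t ^ 2) :=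
    setIntegral_congr_fun measurableSet_Ioi hpt
  -- bound the Gaussian tail
  have hi1 : IntegrableOn (fun t : ℝ => Real.exp (-t ^ 2)) (Ioi x) := by
    have := (integrable_exp_neg_mul_sq (one_pos)).integrableOn (s := Ioi x)
    simpa using this
  have hi2 : Integrable (fun t : ℝ => Real.exp (-(t - x) ^ 2)) := by
    have := (integrable_exp_neg_mul_sq (one_pos)).comp_sub_right x
    simpa using this
  have hi2' : IntegrableOn
      (fun t : ℝ => Real.exp (-x ^ 2) * Real.exp (-(t - x) ^ 2)) (Ioi x) :=
    ((hi2.const_mul _)).integrableOn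
  have hmono : (∫ t in Ioi x, Real.exp (-t ^ 2))
      ≤ ∫ t in Ioi x, Real.exp (-x ^ 2) * Real.exp (-(t - x) ^ 2) := by
    apply setIntegral_mono_on hi1 hi2' measurableSet_Ioi
    intro t ht
    rw [← Real.exp_add]
    apply Real.exp_le_exp.2
    have : x < t := ht
    nlinarith
  have htrans : (∫ t in Ioi x, Real.exp (-(t - x) ^ 2))
      = ∫ s in Ioi (0:ℝ), Real.exp (-s ^ 2) := by
    have himg2 : (fun s : ℝ => s + x) '' Ioi 0 = Ioi x := by
      rw [Set.image_add_const_Ioi, zero_add]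
    have hder : ∀ s ∈ Ioi (0:ℝ),
        HasDerivWithinAt (fun s : ℝ => s + x) ((fun _ : ℝ => (1:ℝ)) s) (Ioi 0) s :=
      fun s _ => ((hasDerivAt_id s).add_const x).hasDerivWithinAt
    have hinj2 : InjOn (fun s : ℝ => s + x) (Ioi 0) := fun s _ t _ hst => by
      simpa using hst
    have h3 := integral_image_eq_integral_abs_deriv_smul measurableSet_Ioi hder hinj2
        (fun t => Real.exp (-(t - x) ^ 2))
    rw [himg2] at h3
    rw [h3]
    apply setIntegral_congr_fun measurableSet_Ioi
    intro s _
    simp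
  have hgauss : (∫ s in Ioi (0:ℝ), Real.exp (-s ^ 2)) = Real.sqrt Real.pi / 2 := by
    have := integral_gaussian_Ioi 1
    simpa using this
  have hxh : Real.sqrt a * Real.exp (-x ^ 2) = Real.sqrt h := by
    have h1 : Real.exp (-x ^ 2) = Real.sqrt (Real.exp (-L)) := by
      rw [← Real.exp_half]; congr 1; rw [hx2]; ring
    rw [h1, Real.exp_neg, Real.exp_log (by positivity), ← Real.sqrt_mul ha.le]
    congr 1
    field_simp
  calc (∫ u in Set.Ioc (0:ℝ) h, g u)
      = ∫ t in Ioi x, 2 * Real.sqrt 2 * Real.sqrt a * Real.exp (-t ^ 2) := by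
        rw [hIoc, hchg, hchg2]
    _ = 2 * Real.sqrt 2 * Real.sqrt a * ∫ t in Ioi x, Real.exp (-t ^ 2) :=
        integral_const_mul _ _
    _ ≤ 2 * Real.sqrt 2 * Real.sqrt a *
        ∫ t in Ioi x, Real.exp (-x ^ 2) * Real.exp (-(t - x) ^ 2) := by
        apply mul_le_mul_of_nonneg_left hmono (by positivity)
    _ = 2 * Real.sqrt 2 * Real.sqrt a * (Real.exp (-x ^ 2) * (Real.sqrt Real.pi / 2)) := by
        rw [integral_const_mul, htrans, hgauss]
    _ = Real.sqrt 2 * Real.sqrt Real.pi * (Real.sqrt a * Real.exp (-x ^ 2)) := by ring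
    _ = Real.sqrt 2 * Real.sqrt Real.pi * Real.sqrt h := by rw [hxh]
    _ ≤ 2 * Real.sqrt Real.pi * Real.sqrt h := by
        have hs2 : Real.sqrt 2 ≤ 2 := by
          nlinarith [Real.sq_sqrt (show (0:ℝ) ≤ 2 by norm_num), Real.sqrt_nonneg 2]
        exact mul_le_mul_of_nonneg_right
          (mul_le_mul_of_nonneg_right hs2 (Real.sqrt_nonneg Real.pi)) (Real.sqrt_nonneg h)
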